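/- Let A ≥ 1 be a natural number, K ≥ 0, and let b : (Fin A → ℝ) → (Fin A → ℝ) be Lipschitz with constant K and satisfy: (i) for every y ∈ S_Y and every k, if y_k = 0 then b_k(y) ≥ 0; (ii) for every y ∈ S_Y with ∑_{k=0}^{A−1} y_k = 1, ∑_{k=0}^{A−1} b_k(y) ≤ 0. Then for every y₀ ∈ S_Y there exists Y : ℝ → (Fin A → ℝ) such that Y(0) = y₀, Y(t) ∈ S_Y for all t ≥ 0, and Y is differentiable within [0,∞) at every t ≥ 0 with derivative b(Y(t)); moreover, any two functions with these three properties agree on [0,∞). -/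

import Mathlib

open Set Filter Metric Real

/-- The simplex `S_Y` of sub-probability vectors in `[0,1]^A`. -/
def SY (A : ℕ) : Set (Fin A → ℝ) :=
  {y | (∀ k, 0 ≤ y k ∧ y k ≤ 1) ∧ ∑ k, y k ≤ 1}

lemma SY_isClosed (A : ℕ) : IsClosed (SY A) := by
  have h : SY A = (⋂ k, ({y : Fin A → ℝ | 0 ≤ y k} ∩ {y | y k ≤ 1})) ∩ {y | ∑ k, y k ≤ 1} := by
    ext y; simp [SY, Set.mem_iInter]
  rw [h]
  exact IsClosed.inter
    (isClosed_iInter fun k =>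
      (isClosed_le continuous_const (continuous_apply k)).inter
        (isClosed_le (continuous_apply k) continuous_const))
    (isClosed_le (continuous_finset_sum _ fun k _ => continuous_apply k) continuous_const)

lemma SY_nonempty (A : ℕ) : (SY A).Nonempty :=
  ⟨0, ⟨fun k => by norm_num, by simp⟩⟩

lemma aux_ev {c d : ℝ} (hc : 0 ≤ c) (h0 : c = 0 → 0 ≤ d) :
    ∀ᶠ h in nhdsWithin (0:ℝ) (Ioi 0), 0 ≤ c + h * d := by
  rcases eq_or_lt_of_le hc with h | h
  · filter_upwards [self_mem_nhdsWithin] with x hx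
    have hd := h0 h.symm
    have hx' : (0:ℝ) < x := hx
    nlinarith
  · have ht : Tendsto (fun x : ℝ => c + x * d) (nhdsWithin 0 (Ioi 0)) (nhds c) := by
      have h2 : Continuous (fun x : ℝ => c + x * d) := by continuity
      have h3 := h2.tendsto (0:ℝ)
      simp only [zero_mul, add_zero] at h3
      exact h3.mono_left nhdsWithin_le_nhds
    exact ht.eventually (eventually_ge_nhds h)

lemma feasible {A : ℕ} {y v : Fin A → ℝ} (hy : y ∈ SY A)
    (h0 : ∀ k, y k = 0 → 0 ≤ v k) (h1 : (∑ k, y k) = 1 → (∑ k, v k) ≤ 0) :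
    ∀ᶠ h in nhdsWithin (0:ℝ) (Ioi 0), y + h • v ∈ SY A := by
  obtain ⟨hbd, hsum⟩ := hy
  have hup : ∀ k, y k = 1 → v k ≤ 0 := by
    intro k hk
    have hsum1 : (∑ j, y j) = 1 := by
      have h1' : (1:ℝ) ≤ ∑ j, y j := by
        calc (1:ℝ) = y k := hk.symm
        _ ≤ ∑ j, y j := Finset.single_le_sum (fun j _ => (hbd j).1) (Finset.mem_univ k)
      linarith
    have herase : ∑ j ∈ Finset.univ.erase k, y j = 0 := by
      have h2 := Finset.add_sum_erase (Finset.univ) y (Finset.mem_univ k)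
      rw [hsum1, hk] at h2
      linarith
    have hz : ∀ j ∈ Finset.univ.erase k, y j = 0 :=
      (Finset.sum_eq_zero_iff_of_nonneg (fun j _ => (hbd j).1)).1 herase
    have hvk : v k + ∑ j ∈ Finset.univ.erase k, v j ≤ 0 := by
      rw [Finset.add_sum_erase _ v (Finset.mem_univ k)]
      exact h1 hsum1
    have hnn : 0 ≤ ∑ j ∈ Finset.univ.erase k, v j :=
      Finset.sum_nonneg fun j hj => h0 j (hz j hj)
    linarith
  have E1 : ∀ᶠ h in nhdsWithin (0:ℝ) (Ioi 0), ∀ k, 0 ≤ y k + h * v k :=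
    eventually_all.2 fun k => aux_ev (hbd k).1 (h0 k)
  have E2 : ∀ᶠ h in nhdsWithin (0:ℝ) (Ioi 0), ∀ k, y k + h * v k ≤ 1 := by
    refine eventually_all.2 fun k => ?_
    have h3 := aux_ev (c := 1 - y k) (d := -v k) (by linarith [(hbd k).2])
      (fun hc => by
        have hk1 : y k = 1 := by linarith
        linarith [hup k hk1])
    exact h3.mono fun h hh => by linarith
  have E3 : ∀ᶠ h in nhdsWithin (0:ℝ) (Ioi 0), (∑ k, y k) + h * ∑ k, v k ≤ 1 := by
    have h3 := aux_ev (c := 1 - ∑ k, y k) (d := -∑ k, v k) (by linarith)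
      (fun hc => by
        have hs1 : (∑ k, y k) = 1 := by linarith
        linarith [h1 hs1])
    exact h3.mono fun h hh => by linarith
  filter_upwards [E1, E2, E3] with h h1' h2' h3'
  constructor
  · intro k
    simp only [Pi.add_apply, Pi.smul_apply, smul_eq_mul]
    exact ⟨h1' k, h2' k⟩
  · simp only [Pi.add_apply, Pi.smul_apply, smul_eq_mul]
    have hsum' : ∑ k, (y k + h * v k) = (∑ k, y k) + h * ∑ k, v k := by
      rw [Finset.sum_add_distrib, Finset.mul_sum]
    rw [hsum']
    exact h3'

noncomputable def clampV (A : ℕ) : (Fin A → ℝ) → (Fin A → ℝ) := fun x k => min 1 (max 0 (x k))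

lemma clampV_lipschitz (A : ℕ) : LipschitzWith 1 (clampV A) := by
  apply LipschitzWith.of_dist_le_mul
  intro x y
  rw [NNReal.coe_one, one_mul, dist_pi_le_iff dist_nonneg]
  intro k
  have h1 : LipschitzWith 1 (fun a : ℝ => min 1 (max 0 a)) :=
    (LipschitzWith.id.const_max 0).const_min 1
  calc dist (clampV A x k) (clampV A y k) ≤ 1 * dist (x k) (y k) := by
        simpa [clampV] using h1.dist_le_mul (x k) (y k)
  _ ≤ dist x y := by rw [one_mul]; exact dist_le_pi_dist x y k

lemma clampV_norm_le (A : ℕ) (x : Fin A → ℝ) : ‖clampV A x‖ ≤ 1 := by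
  rw [pi_norm_le_iff_of_nonneg zero_le_one]
  intro k
  rw [Real.norm_eq_abs, abs_le]
  constructor
  · have : (0:ℝ) ≤ min 1 (max 0 (x k)) := le_min zero_le_one (le_max_left 0 _)
    simpa [clampV] using by linarith
  · exact min_le_left _ _

lemma clampV_eq_of_mem {A : ℕ} {y : Fin A → ℝ} (hy : y ∈ SY A) : clampV A y = y := by
  funext k
  simp only [clampV]
  rw [max_eq_right (hy.1 k).1, min_eq_right (hy.1 k).2]

lemma invariance {A : ℕ} (b btil : (Fin A → ℝ) → (Fin A → ℝ)) (L : NNReal)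
    (hL : LipschitzWith L btil) (heq : ∀ y ∈ SY A, btil y = b y)
    (hb0 : ∀ y ∈ SY A, ∀ k, y k = 0 → 0 ≤ b y k)
    (hb1 : ∀ y ∈ SY A, (∑ k, y k) = 1 → (∑ k, b y k) ≤ 0)
    {T : ℝ} {Z : ℝ → Fin A → ℝ} (hZc : ContinuousOn Z (Icc 0 T))
    (hZd : ∀ t ∈ Ico 0 T, HasDerivWithinAt Z (btil (Z t)) (Ici t) t)
    (hZ0 : Z 0 ∈ SY A) : ∀ t ∈ Icc 0 T, Z t ∈ SY A := by
  set S := SY A with hS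
  set g : ℝ → ℝ := fun t => infDist (Z t) S with hg
  have hgc : ContinuousOn g (Icc 0 T) := (continuous_infDist_pt S).comp_continuousOn hZc
  have hgnn : ∀ t, 0 ≤ g t := fun t => infDist_nonneg
  have hgslope : ∀ x ∈ Ico 0 T, ∀ r, (L:ℝ) * g x < r →
      ∃ᶠ z in nhdsWithin x (Ioi x), slope g x z < r := by
    intro x hx r hr
    obtain ⟨y, hyS, hyd⟩ := (SY_isClosed A).exists_infDist_eq_dist (SY_nonempty A) (Z x)
    have hgx : g x = ‖Z x - y‖ := by rw [hg]; simp only; rw [hyd, dist_eq_norm]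
    set δ := r - (L:ℝ) * g x with hδ
    have hδpos : 0 < δ := by rw [hδ]; linarith
    have hEmem : ∀ᶠ z in nhdsWithin x (Ioi x), y + (z - x) • (btil y) ∈ S := by
      have htd : Tendsto (fun z => z - x) (nhdsWithin x (Ioi x)) (nhdsWithin (0:ℝ) (Ioi 0)) := by
        refine tendsto_nhdsWithin_iff.2 ⟨?_, ?_⟩
        · have hco : Continuous (fun z : ℝ => z - x) := by continuity
          have := hco.tendsto x
          simp only [sub_self] at this
          exact this.mono_left nhdsWithin_le_nhds
        · filter_upwards [self_mem_nhdsWithin] with z hz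
          simpa [sub_pos] using hz
      have hv0 : ∀ k, y k = 0 → 0 ≤ btil y k := by
        rw [heq y hyS]; exact hb0 y hyS
      have hv1 : (∑ k, y k) = 1 → (∑ k, btil y k) ≤ 0 := by
        rw [heq y hyS]; exact hb1 y hyS
      exact htd.eventually (feasible hyS hv0 hv1)
    have hDer : Tendsto (fun z => ‖z - x‖⁻¹ * ‖Z z - Z x - (z - x) • btil (Z x)‖)
        (nhdsWithin x (Ioi x)) (nhds 0) := by
      have h1 := hasDerivWithinAt_iff_tendsto.1 (hZd x hx)
      exact h1.mono_left (nhdsWithin_mono x Ioi_subset_Ici_self)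
    have hsmall : ∀ᶠ z in nhdsWithin x (Ioi x),
        ‖z - x‖⁻¹ * ‖Z z - Z x - (z - x) • btil (Z x)‖ < δ / 2 :=
      hDer.eventually_lt_const (by positivity)
    apply Filter.Eventually.frequently
    filter_upwards [hEmem, hsmall, self_mem_nhdsWithin] with z hz1 hz2 hz3
    have hzx : 0 < z - x := sub_pos.2 hz3
    have hL1 : ‖btil (Z x) - btil y‖ ≤ (L:ℝ) * g x := by
      have h2 := hL.dist_le_mul (Z x) y
      rw [dist_eq_norm, dist_eq_norm] at h2
      rw [hgx]
      exact h2
    have hA : ‖Z z - Z x - (z - x) • btil (Z x)‖ ≤ (z - x) * (δ / 2) := by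
      have hnorm : ‖z - x‖ = z - x := by rw [Real.norm_eq_abs, abs_of_pos hzx]
      rw [hnorm] at hz2
      have h3 := mul_le_mul_of_nonneg_left hz2.le hzx.le
      rwa [← mul_assoc, mul_inv_cancel₀ hzx.ne', one_mul] at h3
    have hgz : g z - g x ≤ (z - x) * ((L:ℝ) * g x + δ / 2) := by
      have hle : g z ≤ dist (Z z) (y + (z - x) • btil y) := infDist_le_dist_of_mem hz1
      have hdec : Z z - (y + (z - x) • btil y)
          = (Z z - Z x - (z - x) • btil (Z x)) + ((z - x) • (btil (Z x) - btil y) + (Z x - y)) := by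
        module
      have hnle : ‖Z z - (y + (z - x) • btil y)‖
          ≤ ‖Z z - Z x - (z - x) • btil (Z x)‖ + (‖(z - x) • (btil (Z x) - btil y)‖ + ‖Z x - y‖) := by
        rw [hdec]
        exact (norm_add_le _ _).trans (by gcongr; exact norm_add_le _ _)
      have hsm : ‖(z - x) • (btil (Z x) - btil y)‖ ≤ (z - x) * ((L:ℝ) * g x) := by
        rw [norm_smul, Real.norm_eq_abs, abs_of_pos hzx]
        exact mul_le_mul_of_nonneg_left hL1 hzx.le
      rw [dist_eq_norm] at hle
      have h4 : g z ≤ (z - x) * (δ / 2) + ((z - x) * ((L:ℝ) * g x) + ‖Z x - y‖) :=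
        hle.trans (hnle.trans (add_le_add hA (add_le_add hsm le_rfl)))
      rw [hgx]
      rw [hgx] at h4
      nlinarith
    rw [slope_def_field, div_lt_iff₀ hzx]
    have hlt : (L:ℝ) * g x + δ / 2 < r := by rw [hδ]; linarith
    calc g z - g x ≤ (z - x) * ((L:ℝ) * g x + δ / 2) := hgz
    _ < (z - x) * r := by exact mul_lt_mul_of_pos_left hlt hzx
    _ = r * (z - x) := mul_comm _ _
  have key : ∀ ε : ℝ, 0 < ε → ∀ t ∈ Icc 0 T, g t ≤ ε * Real.exp (((L:ℝ) + 1) * t) := by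
    intro ε hε
    have hB : ∀ x : ℝ, HasDerivAt (fun t => ε * Real.exp (((L:ℝ) + 1) * t))
        (ε * (((L:ℝ) + 1) * Real.exp (((L:ℝ) + 1) * x))) x := by
      intro x
      have h1 : HasDerivAt (fun t : ℝ => ((L:ℝ) + 1) * t) ((L:ℝ) + 1) x := by
        simpa using (hasDerivAt_id x).const_mul ((L:ℝ) + 1)
      have h2 := (Real.hasDerivAt_exp (((L:ℝ) + 1) * x)).comp x h1
      have h3 := h2.const_mul ε
      simpa [mul_comm, mul_left_comm] using h3
    have h0 : g 0 ≤ ε * Real.exp (((L:ℝ) + 1) * 0) := by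
      have : g 0 = 0 := infDist_zero_of_mem hZ0
      rw [this]
      positivity
    intro t ht
    refine image_le_of_liminf_slope_right_lt_deriv_boundary' hgc hgslope h0
      (fun x _ => (hB x).continuousAt.continuousWithinAt)
      (fun x _ => (hB x).hasDerivWithinAt) ?_ ht
    intro x hx hgB
    rw [hgB]
    have hpos : 0 < ε * Real.exp (((L:ℝ) + 1) * x) := by positivity
    nlinarith
  intro t ht
  have hle : g t ≤ 0 := by
    have htt : Tendsto (fun ε : ℝ => ε * Real.exp (((L:ℝ) + 1) * t))
        (nhdsWithin (0:ℝ) (Ioi 0)) (nhds 0) := by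
      have hco : Continuous (fun ε : ℝ => ε * Real.exp (((L:ℝ) + 1) * t)) := by continuity
      have h2 := hco.tendsto (0:ℝ)
      simp only [zero_mul] at h2
      exact h2.mono_left nhdsWithin_le_nhds
    refine ge_of_tendsto htt ?_
    filter_upwards [self_mem_nhdsWithin] with ε hε
    exact key ε hε t ht
  have hzero : g t = 0 := le_antisymm hle (hgnn t)
  exact ((SY_isClosed A).mem_iff_infDist_zero (SY_nonempty A)).2 hzero

/-- the ODE system `dY_k/dt = b_k(Y(t))` with Lipschitz drift `b`
satisfying the inward-pointing boundary conditions on `S_Y` has, for every initial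
condition `y₀ ∈ S_Y`, a solution staying in `S_Y` for all `t ≥ 0`; moreover any
two such solutions agree on `[0,∞)`. -/
theorem slowPhase_ODE_wellPosed (A : ℕ) (hA : 1 ≤ A) (K : ℝ) (hK : 0 ≤ K)
    (b : (Fin A → ℝ) → (Fin A → ℝ)) (hLip : LipschitzWith K.toNNReal b)
    (hb0 : ∀ y ∈ SY A, ∀ k, y k = 0 → 0 ≤ b y k)
    (hb1 : ∀ y ∈ SY A, (∑ k, y k) = 1 → (∑ k, b y k) ≤ 0)
    (y₀ : Fin A → ℝ) (hy₀ : y₀ ∈ SY A) :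
    (∃ Y : ℝ → (Fin A → ℝ), Y 0 = y₀ ∧ (∀ t, 0 ≤ t → Y t ∈ SY A) ∧
        ∀ t, 0 ≤ t → HasDerivWithinAt Y (b (Y t)) (Set.Ici 0) t) ∧
    ∀ Y₁ Y₂ : ℝ → (Fin A → ℝ),
      (Y₁ 0 = y₀ ∧ (∀ t, 0 ≤ t → Y₁ t ∈ SY A) ∧
        ∀ t, 0 ≤ t → HasDerivWithinAt Y₁ (b (Y₁ t)) (Set.Ici 0) t) →
      (Y₂ 0 = y₀ ∧ (∀ t, 0 ≤ t → Y₂ t ∈ SY A) ∧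
        ∀ t, 0 ≤ t → HasDerivWithinAt Y₂ (b (Y₂ t)) (Set.Ici 0) t) →
      ∀ t, 0 ≤ t → Y₁ t = Y₂ t := by
  classical
  -- general uniqueness helper
  have huniq : ∀ (v : (Fin A → ℝ) → (Fin A → ℝ)) (Lv : NNReal), LipschitzWith Lv v →
      ∀ (T : ℝ) (f g : ℝ → Fin A → ℝ), ContinuousOn f (Icc 0 T) → ContinuousOn g (Icc 0 T) →
      (∀ t ∈ Ico (0:ℝ) T, HasDerivWithinAt f (v (f t)) (Ici t) t) →
      (∀ t ∈ Ico (0:ℝ) T, HasDerivWithinAt g (v (g t)) (Ici t) t) →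
      f 0 = g 0 → ∀ t ∈ Icc (0:ℝ) T, f t = g t := by
    intro v Lv hv T f g hfc hgc hfd hgd h0 t ht
    exact ODE_solution_unique_of_mem_Icc_right (v := fun _ => v) (s := fun _ => univ)
      (fun _ _ => hv.lipschitzOnWith) hfc hfd (fun _ _ => mem_univ _) hgc hgd
      (fun _ _ => mem_univ _) h0 ht
  set btil : (Fin A → ℝ) → (Fin A → ℝ) := fun x => b (clampV A x) with hbtil
  have heq : ∀ y ∈ SY A, btil y = b y := by
    intro y hy
    rw [hbtil]
    simp only
    rw [clampV_eq_of_mem hy]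
  set L : NNReal := K.toNNReal * 1 with hLdef
  have hbtilLip : LipschitzWith L btil := hLip.comp (clampV_lipschitz A)
  set C : ℝ := K + ‖b 0‖ with hCdef
  have hC0 : 0 ≤ C := add_nonneg hK (norm_nonneg _)
  have hC : ∀ x, ‖btil x‖ ≤ C := by
    intro x
    have h1 : ‖btil x - b 0‖ ≤ K * 1 := by
      have h2 := hLip.dist_le_mul (clampV A x) 0
      rw [dist_eq_norm, dist_eq_norm, sub_zero, Real.coe_toNNReal K hK] at h2
      calc ‖btil x - b 0‖ = ‖b (clampV A x) - b 0‖ := rfl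
      _ ≤ K * ‖clampV A x‖ := h2
      _ ≤ K * 1 := by
        exact mul_le_mul_of_nonneg_left (clampV_norm_le A x) hK
    have h3 := norm_sub_norm_le (btil x) (b 0)
    rw [hCdef]
    linarith
  -- Existence on each interval [0, n+1]
  have hexist2 : ∀ n : ℕ, ∃ f : ℝ → (Fin A → ℝ), f 0 = y₀ ∧
      ContinuousOn f (Icc (0:ℝ) (n+1)) ∧
      (∀ t ∈ Icc (0:ℝ) (n+1), HasDerivWithinAt f (btil (f t)) (Icc (0:ℝ) (n+1)) t) ∧
      (∀ t ∈ Ico (0:ℝ) (n+1), HasDerivWithinAt f (btil (f t)) (Ici t) t) ∧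
      (∀ t ∈ Icc (0:ℝ) (n+1), f t ∈ SY A) := by
    intro n
    set T : ℝ := n + 1 with hTdef
    have hT : (0:ℝ) < T := by positivity
    have hpl : IsPicardLindelof (tmin := 0) (tmax := T) (fun _ x => btil x) ⟨0, le_refl 0, hT.le⟩ y₀
        ⟨C * T, mul_nonneg hC0 hT.le⟩ 0 ⟨C, hC0⟩ L :=
      IsPicardLindelof.of_time_independent (fun x _ => hC x) hbtilLip.lipschitzOnWith
        (by simp [max_eq_left hT.le]; exact le_rfl)
    obtain ⟨f, hf0', hfd⟩ := IsPicardLindelof.exists_eq_forall_mem_Icc_hasDerivWithinAt₀ hpl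
    have hf0 : f 0 = y₀ := hf0'
    have hfc : ContinuousOn f (Icc (0:ℝ) T) := fun t ht => (hfd t ht).continuousWithinAt
    have hici : ∀ t ∈ Ico (0:ℝ) T, HasDerivWithinAt f (btil (f t)) (Ici t) t := by
      intro t ht
      refine (hfd t (Ico_subset_Icc_self ht)).mono_of_mem_nhdsWithin ?_
      refine mem_nhdsWithin.2 ⟨Iio T, isOpen_Iio, ht.2, ?_⟩
      rintro s ⟨hs1, hs2⟩
      exact ⟨le_trans ht.1 hs2, hs1.le⟩
    have hmem := invariance b btil L hbtilLip heq hb0 hb1 hfc hici (hf0.symm ▸ hy₀)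
    exact ⟨f, hf0, hfc, hfd, hici, hmem⟩
  choose F hF0 hFc hFicc hFd hFS using hexist2
  have hagree : ∀ n m : ℕ, n ≤ m → ∀ t ∈ Icc (0:ℝ) (n+1), F n t = F m t := by
    intro n m hnm t ht
    have hle : ((n:ℝ)+1) ≤ ((m:ℝ)+1) := by
      have := (Nat.cast_le (α := ℝ)).2 hnm
      linarith
    have hsub : Icc (0:ℝ) (n+1) ⊆ Icc (0:ℝ) (m+1) := Icc_subset_Icc le_rfl hle
    refine huniq btil L hbtilLip ((n:ℝ)+1) (F n) (F m) (hFc n) ((hFc m).mono hsub)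
      (hFd n) ?_ (by rw [hF0 n, hF0 m]) t ht
    intro s hs
    exact hFd m s ⟨hs.1, lt_of_lt_of_le hs.2 hle⟩
  have hYeq : ∀ n : ℕ, ∀ t ∈ Icc (0:ℝ) (n+1), F ⌈t⌉₊ t = F n t := by
    intro n t ht
    rcases le_total (⌈t⌉₊) n with h | h
    · refine hagree _ _ h t ⟨ht.1, ?_⟩
      exact (Nat.le_ceil t).trans (le_add_of_nonneg_right zero_le_one)
    · exact (hagree _ _ h t ht).symm
  refine ⟨⟨fun t => F ⌈t⌉₊ t, ?_, ?_, ?_⟩, ?_⟩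
  · have h0 : (0:ℝ) ∈ Icc (0:ℝ) ((0:ℕ)+1) := by norm_num
    show F ⌈(0:ℝ)⌉₊ 0 = y₀
    rw [hYeq 0 0 h0, hF0 0]
  · intro t ht
    have htm : t ∈ Icc (0:ℝ) ((⌈t⌉₊:ℝ)+1) :=
      ⟨ht, (Nat.le_ceil t).trans (le_add_of_nonneg_right zero_le_one)⟩
    exact hFS _ t htm
  · intro t ht
    set n := ⌈t⌉₊ with hn
    have htn : t ∈ Icc (0:ℝ) ((n:ℝ)+1) :=
      ⟨ht, (Nat.le_ceil t).trans (le_add_of_nonneg_right zero_le_one)⟩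
    have htlt : t < (n:ℝ)+1 := lt_of_le_of_lt (Nat.le_ceil t) (lt_add_one _)
    have hmem : Icc (0:ℝ) ((n:ℝ)+1) ∈ nhdsWithin t (Ici 0) := by
      refine mem_nhdsWithin.2 ⟨Iio ((n:ℝ)+1), isOpen_Iio, htlt, ?_⟩
      rintro s ⟨hs1, hs2⟩
      exact ⟨hs2, hs1.le⟩
    have hd : HasDerivWithinAt (F n) (btil (F n t)) (Ici 0) t :=
      (hFicc n t htn).mono_of_mem_nhdsWithin hmem
    have hYt : F ⌈t⌉₊ t = F n t := hYeq n t htn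
    have hcongr : HasDerivWithinAt (fun s => F ⌈s⌉₊ s) (btil (F n t)) (Ici 0) t := by
      refine hd.congr_of_eventuallyEq ?_ hYt
      filter_upwards [hmem] with s hs
      exact hYeq n s hs
    have hmemS : F ⌈t⌉₊ t ∈ SY A := hYt.symm ▸ hFS n t htn
    have hfield : btil (F n t) = b (F ⌈t⌉₊ t) := by
      rw [← hYt]
      exact heq _ hmemS
    rw [hfield] at hcongr
    exact hcongr
  · rintro Y₁ Y₂ ⟨h10, h1S, h1d⟩ ⟨h20, h2S, h2d⟩ t ht
    have hc1 : ContinuousOn Y₁ (Icc 0 (t+1)) := fun s hs =>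
      ((h1d s hs.1).continuousWithinAt).mono (fun u hu => hu.1)
    have hc2 : ContinuousOn Y₂ (Icc 0 (t+1)) := fun s hs =>
      ((h2d s hs.1).continuousWithinAt).mono (fun u hu => hu.1)
    have hd1 : ∀ s ∈ Ico (0:ℝ) (t+1), HasDerivWithinAt Y₁ (b (Y₁ s)) (Ici s) s :=
      fun s hs => (h1d s hs.1).mono (Ici_subset_Ici.2 hs.1)
    have hd2 : ∀ s ∈ Ico (0:ℝ) (t+1), HasDerivWithinAt Y₂ (b (Y₂ s)) (Ici s) s :=
      fun s hs => (h2d s hs.1).mono (Ici_subset_Ici.2 hs.1)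
    exact huniq b K.toNNReal hLip (t+1) Y₁ Y₂ hc1 hc2 hd1 hd2 (by rw [h10, h20]) t
      ⟨ht, by linarith⟩
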